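/- (Gap analysis, Case 6: R12 ≤ R21, R13 ≥ R31, R23 ≤ R32; cyclic strategy for the cycle 1→3→2→1 needed.) Suppose the nonnegative rate tuple lies in C̲'_g and additionally R12 ≤ R21, R13 ≥ R31, R23 ≤ R32. Let R132^c = min(R21−R12, R32−R23, R13−R31). Define α32^b = (2^{2R23+1}−1)/(2h3²P), α31^b = 2^{2R23+1}(2^{2R31+1}−1)/(2h3²P), α32^c = 2^{2R23+2R31+2}(2^{2R132^c+1}−1)/(2h3²P), α32^u = 2^{2R132^c+2R23+2R31+3}(2^{2(R32−R23−R132^c)}−1)/(h3²P), α21^b = 2^{2R32+2R31+3}(2^{2R12+1}−1)/(2h2²P), α21^c = 2^{2R12+2R32+2R31+4}(2^{2R132^c+1}−1)/(2h2²P), α21^u = 2^{2R12+2R32+2R132^c+2R31+5}(2^{2(R21−R12−R132^c)}−1)/(h2²P), α13^u = 2^{2R21+2R32+2R31+5}(2^{2(R13−R31−R132^c)}−1)/(h1²P), with α23^b = (h3²/h2²)α32^b, α13^b = (h3²/h1²)α31^b, α12^b = (h2²/h1²)α21^b, α13^c = (h3²/h1²)α32^c, ᾶ13^c = (h2²/h1²)α21^c.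 Then α32^b+α31^b+α32^c+α32^u ≤ 1, α23^b+α21^b+α21^c+α21^u ≤ 1, α13^b+α12^b+α13^c+ᾶ13^c+α13^u ≤ 1, and (2^{2(R13+R23)}−1)/(h3²P) + 2^{2(R13+R23)}(2^{2(R32−R23+R12)}−1)/(h2²P) + 2^{2(R13+R32+R12)}(2^{2(R21−R12−R132^c)}−1)/(h1²P) ≤ 1. -/

import Mathlib

noncomputable def Cg (x : ℝ) : ℝ := (1 / 2) * Real.logb 2 (1 + x)

private lemma two_rpow_add' (a b : ℝ) : (2:ℝ)^(a+b) = (2:ℝ)^a * (2:ℝ)^b :=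
  Real.rpow_add two_pos a b

private lemma two_rpow_sub' (a b : ℝ) : (2:ℝ)^(a-b) = (2:ℝ)^a / (2:ℝ)^b :=
  Real.rpow_sub two_pos a b

private lemma cg_key {y x : ℝ} (hx : 0 < x) (h : y ≤ Cg x) : (2:ℝ)^(2*y) ≤ 1 + x := by
  have h2 : 2*y ≤ Real.logb 2 (1+x) := by unfold Cg at h; linarith
  calc (2:ℝ)^(2*y) ≤ (2:ℝ)^(Real.logb 2 (1+x)) :=
        Real.rpow_le_rpow_of_exponent_le one_le_two h2
    _ = 1+x := Real.rpow_logb two_pos (by norm_num) (by linarith)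

private lemma one_le_tp {r : ℝ} (h : 0 ≤ r) : 1 ≤ (2:ℝ)^(2*r) :=
  Real.one_le_rpow one_le_two (by linarith)

private lemma tp_mono {a b : ℝ} (h : a ≤ b) : (2:ℝ)^(2*a) ≤ (2:ℝ)^(2*b) :=
  Real.rpow_le_rpow_of_exponent_le one_le_two (by linarith)

private lemma one_le_mul3 {a b : ℝ} (ha : 1 ≤ a) (hb : 1 ≤ b) : 1 ≤ a*b := by nlinarith

private lemma absq {h2 h3 : ℝ} (hh23 : h3^2 ≤ h2^2) : (|h2| + |h3|)^2 ≤ 4*h2^2 := by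
  have h32 : |h3| ≤ |h2| := by
    nlinarith [sq_abs h2, sq_abs h3, abs_nonneg h2, abs_nonneg h3]
  nlinarith [sq_abs h2, sq_abs h3, abs_nonneg h2, abs_nonneg h3,
    mul_le_mul_of_nonneg_left h32 (abs_nonneg h2)]

private lemma twoD_le {D E F : ℝ} (hDF : D ≤ F) (hE1 : 1 ≤ E) (hD0 : 0 < D) (hF0 : 0 < F) :
    2*D ≤ 8*(E*F) := by nlinarith

private lemma num3bound {A B C D E F G x : ℝ} (hD1 : 1 ≤ D) (hG0 : 0 < G)
    (hCEF : 1 ≤ C*E*F) (hDGF : D*G ≤ F) (hAGC : A*G ≤ C) (hE0 : 0 < E) (hF0 : 0 < F)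
    (hMain : 64*(B*C*F) ≤ (1 + 2*x)*G) (hx : 0 < x) :
    (8*(D*E*G) - 2*D - 8*(E*F) + 32*(A*E*F*G) - 64*(C*E*F))*G + 64*(B*C*F) ≤ 2*x*G := by
  nlinarith [mul_le_mul_of_nonneg_right hDGF (by positivity : (0:ℝ) ≤ 8*(E*G)),
    mul_le_mul_of_nonneg_right hAGC (by positivity : (0:ℝ) ≤ 32*(E*(F*G))),
    hMain, mul_nonneg (sub_nonneg.mpr hD1) hG0.le,
    mul_nonneg (sub_nonneg.mpr hCEF) hG0.le, hG0.le, hx.le]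

private lemma t3bound {A B C F G x : ℝ} (hABF : 1 ≤ A*B*F) (hG0 : 0 < G) (hx : 0 < x)
    (hMain : 64*(B*C*F) ≤ (1 + 2*x)*G) : (B*C*F - A*B*F*G)*32 ≤ x*G*1 := by
  nlinarith [mul_nonneg (sub_nonneg.mpr hABF) hG0.le, hG0.le, hx.le]

set_option maxHeartbeats 1000000 in
theorem stmt_16
    (P h1 h2 h3 : ℝ) (hP : 0 < P)
    (hh12 : h2 ^ 2 ≤ h1 ^ 2) (hh23 : h3 ^ 2 ≤ h2 ^ 2) (hh3 : 0 < h3 ^ 2)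
    (R12 R13 R21 R23 R31 R32 : ℝ)
    (hr12 : 0 ≤ R12) (hr13 : 0 ≤ R13) (hr21 : 0 ≤ R21)
    (hr23 : 0 ≤ R23) (hr31 : 0 ≤ R31) (hr32 : 0 ≤ R32)
    (hG1 : R31 + R32 ≤ Cg (h3 ^ 2 * P) - 2)
    (hG2 : R13 + R23 ≤ Cg (h3 ^ 2 * P) - 2)
    (hG3 : R12 + R13 + R32 ≤ Cg (h2 ^ 2 * P + h3 ^ 2 * P) - 3)
    (hG4 : R13 + R23 + R12 ≤ Cg (h2 ^ 2 * P + h3 ^ 2 * P) - 3)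
    (hG5 : R12 + R31 + R32 ≤ Cg (h1 ^ 2 * P + h2 ^ 2 * P) - 3)
    (hG6 : R13 + R23 + R21 ≤ Cg (h1 ^ 2 * P + h3 ^ 2 * P) - 3)
    (hG7 : R21 + R31 + R23 ≤ Cg ((|h2| + |h3|) ^ 2 * P) - 7 / 2)
    (hG8 : R21 + R31 + R32 ≤ Cg ((|h2| + |h3|) ^ 2 * P) - 7 / 2)
    (hc1 : R12 ≤ R21) (hc2 : R31 ≤ R13) (hc3 : R23 ≤ R32)
    (R132c : ℝ)
    (hR132c : R132c = min (R21 - R12) (min (R32 - R23) (R13 - R31)))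
    (a32b a31b a32c a32u a21b a21c a21u a13u a23b a13b a12b a13c at13c : ℝ)
    (ha32b : a32b = ((2:ℝ) ^ (2 * R23 + 1) - 1) / (2 * h3 ^ 2 * P))
    (ha31b : a31b = (2:ℝ) ^ (2 * R23 + 1) * ((2:ℝ) ^ (2 * R31 + 1) - 1) / (2 * h3 ^ 2 * P))
    (ha32c : a32c = (2:ℝ) ^ (2 * R23 + 2 * R31 + 2) * ((2:ℝ) ^ (2 * R132c + 1) - 1) / (2 * h3 ^ 2 * P))
    (ha32u : a32u = (2:ℝ) ^ (2 * R132c + 2 * R23 + 2 * R31 + 3) * ((2:ℝ) ^ (2 * (R32 - R23 - R132c)) - 1) / (h3 ^ 2 * P))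
    (ha21b : a21b = (2:ℝ) ^ (2 * R32 + 2 * R31 + 3) * ((2:ℝ) ^ (2 * R12 + 1) - 1) / (2 * h2 ^ 2 * P))
    (ha21c : a21c = (2:ℝ) ^ (2 * R12 + 2 * R32 + 2 * R31 + 4) * ((2:ℝ) ^ (2 * R132c + 1) - 1) / (2 * h2 ^ 2 * P))
    (ha21u : a21u = (2:ℝ) ^ (2 * R12 + 2 * R32 + 2 * R132c + 2 * R31 + 5) * ((2:ℝ) ^ (2 * (R21 - R12 - R132c)) - 1) / (h2 ^ 2 * P))
    (ha13u : a13u = (2:ℝ) ^ (2 * R21 + 2 * R32 + 2 * R31 + 5) * ((2:ℝ) ^ (2 * (R13 - R31 - R132c)) - 1) / (h1 ^ 2 * P))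
    (ha23b : a23b = h3 ^ 2 / h2 ^ 2 * a32b)
    (ha13b : a13b = h3 ^ 2 / h1 ^ 2 * a31b)
    (ha12b : a12b = h2 ^ 2 / h1 ^ 2 * a21b)
    (ha13c : a13c = h3 ^ 2 / h1 ^ 2 * a32c)
    (hat13c : at13c = h2 ^ 2 / h1 ^ 2 * a21c) :
    a32b + a31b + a32c + a32u ≤ 1 ∧
    a23b + a21b + a21c + a21u ≤ 1 ∧
    a13b + a12b + a13c + at13c + a13u ≤ 1 ∧
    ((2:ℝ) ^ (2 * (R13 + R23)) - 1) / (h3 ^ 2 * P)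
      + (2:ℝ) ^ (2 * (R13 + R23)) * ((2:ℝ) ^ (2 * (R32 - R23 + R12)) - 1) / (h2 ^ 2 * P)
      + (2:ℝ) ^ (2 * (R13 + R32 + R12)) * ((2:ℝ) ^ (2 * (R21 - R12 - R132c)) - 1) / (h1 ^ 2 * P) ≤ 1 := by
  have r2 : (2:ℝ)^(2:ℝ) = 4 := by norm_num [Real.rpow_natCast]
  have r3 : (2:ℝ)^(3:ℝ) = 8 := by norm_num [Real.rpow_natCast]
  have r4 : (2:ℝ)^(4:ℝ) = 16 := by norm_num [Real.rpow_natCast]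
  have r5 : (2:ℝ)^(5:ℝ) = 32 := by norm_num [Real.rpow_natCast]
  have r6 : (2:ℝ)^(6:ℝ) = 64 := by norm_num [Real.rpow_natCast]
  have r7 : (2:ℝ)^(7:ℝ) = 128 := by norm_num [Real.rpow_natCast]
  set A := (2:ℝ)^(2*R12) with hA
  set B := (2:ℝ)^(2*R13) with hB
  set C := (2:ℝ)^(2*R21) with hC
  set D := (2:ℝ)^(2*R23) with hD
  set E := (2:ℝ)^(2*R31) with hE
  set F := (2:ℝ)^(2*R32) with hF
  set G := (2:ℝ)^(2*R132c) with hG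
  -- basic positivity
  have hh2 : (0:ℝ) < h2^2 := lt_of_lt_of_le hh3 hh23
  have hh1 : (0:ℝ) < h1^2 := lt_of_lt_of_le hh2 hh12
  have hx3 : (0:ℝ) < h3^2*P := mul_pos hh3 hP
  have hx2 : (0:ℝ) < h2^2*P := mul_pos hh2 hP
  have hx1 : (0:ℝ) < h1^2*P := mul_pos hh1 hP
  have hx32 : h3^2*P ≤ h2^2*P := mul_le_mul_of_nonneg_right hh23 hP.le
  have hx21 : h2^2*P ≤ h1^2*P := mul_le_mul_of_nonneg_right hh12 hP.le
  have h3ne : h3 ≠ 0 := by intro h; rw [h] at hh3; simp at hh3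
  have habs3 : (0:ℝ) < |h3| := abs_pos.mpr h3ne
  have hyabs : (0:ℝ) < |h2| + |h3| := add_pos_of_nonneg_of_pos (abs_nonneg h2) habs3
  have hypos : (0:ℝ) < (|h2| + |h3|)^2 * P := mul_pos (pow_pos hyabs 2) hP
  have habs : (|h2| + |h3|)^2 ≤ 4*h2^2 := absq hh23
  have hy2 : (|h2| + |h3|)^2 * P ≤ 4*(h2^2*P) := by
    have := mul_le_mul_of_nonneg_right habs hP.le
    linarith
  have hy1 : (|h2| + |h3|)^2 * P ≤ 4*(h1^2*P) := le_trans hy2 (by linarith)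
  -- R132c facts
  have hm1 : R132c ≤ R21 - R12 := by rw [hR132c]; exact min_le_left _ _
  have hm2 : R132c ≤ R32 - R23 := by rw [hR132c]; exact (min_le_right _ _).trans (min_le_left _ _)
  have hm3 : R132c ≤ R13 - R31 := by rw [hR132c]; exact (min_le_right _ _).trans (min_le_right _ _)
  have hm0 : 0 ≤ R132c := by
    rw [hR132c]; exact le_min (by linarith) (le_min (by linarith) (by linarith))
  -- one_le facts
  have hA1 : 1 ≤ A := one_le_tp hr12
  have hB1 : 1 ≤ B := one_le_tp hr13
  have hC1 : 1 ≤ C := one_le_tp hr21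
  have hD1 : 1 ≤ D := one_le_tp hr23
  have hE1 : 1 ≤ E := one_le_tp hr31
  have hF1 : 1 ≤ F := one_le_tp hr32
  have hG1' : 1 ≤ G := one_le_tp hm0
  have hA0 : (0:ℝ) < A := lt_of_lt_of_le one_pos hA1
  have hB0 : (0:ℝ) < B := lt_of_lt_of_le one_pos hB1
  have hC0 : (0:ℝ) < C := lt_of_lt_of_le one_pos hC1
  have hD0 : (0:ℝ) < D := lt_of_lt_of_le one_pos hD1
  have hE0 : (0:ℝ) < E := lt_of_lt_of_le one_pos hE1
  have hF0 : (0:ℝ) < F := lt_of_lt_of_le one_pos hF1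
  have hG0 : (0:ℝ) < G := lt_of_lt_of_le one_pos hG1'
  have hDF : D ≤ F := tp_mono hc3
  have hAGC : A*G ≤ C := by
    rw [hA, hG, hC, ← two_rpow_add']
    exact Real.rpow_le_rpow_of_exponent_le one_le_two (by linarith)
  have hDGF : D*G ≤ F := by
    rw [hD, hG, hF, ← two_rpow_add']
    exact Real.rpow_le_rpow_of_exponent_le one_le_two (by linarith)
  have hEGB : E*G ≤ B := by
    rw [hE, hG, hB, ← two_rpow_add']
    exact Real.rpow_le_rpow_of_exponent_le one_le_two (by linarith)
  have hcase : A*G = C ∨ D*G = F ∨ E*G = B := by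
    rcases le_total (R21 - R12) (min (R32 - R23) (R13 - R31)) with hle | hle
    · left
      rw [hA, hG, hC, ← two_rpow_add']
      congr 1
      rw [hR132c, min_eq_left hle]; ring
    · rcases le_total (R32 - R23) (R13 - R31) with hle2 | hle2
      · right; left
        rw [hD, hG, hF, ← two_rpow_add']
        congr 1
        rw [hR132c, min_eq_right hle, min_eq_left hle2]; ring
      · right; right
        rw [hE, hG, hB, ← two_rpow_add']
        congr 1
        rw [hR132c, min_eq_right hle, min_eq_right hle2]; ring
  -- constraint conversions
  have hK1 : 16*(E*F) ≤ 1 + h3^2*P := by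
    have h := cg_key hx3 (show R31+R32+2 ≤ Cg (h3^2*P) by linarith)
    calc 16*(E*F) = (2:ℝ)^(2*(R31+R32+2)) := by
          rw [show 2*(R31+R32+2) = 2*R31+(2*R32+(4:ℝ)) by ring, two_rpow_add', two_rpow_add',
            r4, ← hE, ← hF]; ring
      _ ≤ 1 + h3^2*P := h
  have hK2 : 16*(B*D) ≤ 1 + h3^2*P := by
    have h := cg_key hx3 (show R13+R23+2 ≤ Cg (h3^2*P) by linarith)
    calc 16*(B*D) = (2:ℝ)^(2*(R13+R23+2)) := by
          rw [show 2*(R13+R23+2) = 2*R13+(2*R23+(4:ℝ)) by ring, two_rpow_add', two_rpow_add',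
            r4, ← hB, ← hD]; ring
      _ ≤ 1 + h3^2*P := h
  have hK3 : 64*(A*B*F) ≤ 1 + (h2^2*P + h3^2*P) := by
    have h := cg_key (show (0:ℝ) < h2^2*P + h3^2*P by linarith)
      (show R12+R13+R32+3 ≤ Cg (h2^2*P + h3^2*P) by linarith)
    calc 64*(A*B*F) = (2:ℝ)^(2*(R12+R13+R32+3)) := by
          rw [show 2*(R12+R13+R32+3) = 2*R12+(2*R13+(2*R32+(6:ℝ))) by ring, two_rpow_add',
            two_rpow_add', two_rpow_add', r6, ← hA, ← hB, ← hF]; ring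
      _ ≤ _ := h
  have hK6 : 64*(B*C*D) ≤ 1 + (h1^2*P + h3^2*P) := by
    have h := cg_key (show (0:ℝ) < h1^2*P + h3^2*P by linarith)
      (show R13+R23+R21+3 ≤ Cg (h1^2*P + h3^2*P) by linarith)
    calc 64*(B*C*D) = (2:ℝ)^(2*(R13+R23+R21+3)) := by
          rw [show 2*(R13+R23+R21+3) = 2*R13+(2*R23+(2*R21+(6:ℝ))) by ring, two_rpow_add',
            two_rpow_add', two_rpow_add', r6, ← hB, ← hC, ← hD]; ring
      _ ≤ _ := h
  have hK8 : 128*(C*E*F) ≤ 1 + (|h2| + |h3|)^2*P := by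
    have h := cg_key hypos (show R21+R31+R32+7/2 ≤ Cg ((|h2| + |h3|)^2*P) by linarith)
    calc 128*(C*E*F) = (2:ℝ)^(2*(R21+R31+R32+7/2)) := by
          rw [show 2*(R21+R31+R32+7/2) = 2*R21+(2*R31+(2*R32+(7:ℝ))) by ring, two_rpow_add',
            two_rpow_add', two_rpow_add', r7, ← hC, ← hE, ← hF]; ring
      _ ≤ _ := h
  -- nonzero facts for field_simp
  have hAne : A ≠ 0 := hA0.ne'
  have hDne : D ≠ 0 := hD0.ne'
  have hEne : E ≠ 0 := hE0.ne'
  have hGne : G ≠ 0 := hG0.ne'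
  have hPne : P ≠ 0 := hP.ne'
  have h3n : h3^2 ≠ 0 := hh3.ne'
  have h2n : h2^2 ≠ 0 := hh2.ne'
  have h1n : h1^2 ≠ 0 := hh1.ne'
  -- alpha equalities
  have ea32b : a32b = (2*D - 1)/(2*(h3^2*P)) := by
    rw [ha32b, two_rpow_add', Real.rpow_one, ← hD]; ring
  have ea31b : a31b = 2*D*(2*E - 1)/(2*(h3^2*P)) := by
    rw [ha31b, two_rpow_add', Real.rpow_one, two_rpow_add', Real.rpow_one, ← hD, ← hE]; ring
  have ea32c : a32c = 4*(D*E)*(2*G - 1)/(2*(h3^2*P)) := by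
    rw [ha32c, two_rpow_add', two_rpow_add', r2, two_rpow_add', Real.rpow_one,
      ← hD, ← hE, ← hG]; ring
  have ea32u : a32u = 8*(G*D*E)*(F/D/G - 1)/(h3^2*P) := by
    rw [ha32u, two_rpow_add', two_rpow_add', two_rpow_add', r3,
      show 2*(R32 - R23 - R132c) = 2*R32 - 2*R23 - 2*R132c by ring,
      two_rpow_sub', two_rpow_sub', ← hG, ← hD, ← hE, ← hF]; ring
  have ea21b : a21b = 8*(F*E)*(2*A - 1)/(2*(h2^2*P)) := by
    rw [ha21b, two_rpow_add', two_rpow_add', r3, two_rpow_add', Real.rpow_one,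
      ← hF, ← hE, ← hA]; ring
  have ea21c : a21c = 16*(A*F*E)*(2*G - 1)/(2*(h2^2*P)) := by
    rw [ha21c, two_rpow_add', two_rpow_add', two_rpow_add', r4, two_rpow_add', Real.rpow_one,
      ← hA, ← hF, ← hE, ← hG]; ring
  have ea21u : a21u = 32*(A*F*G*E)*(C/A/G - 1)/(h2^2*P) := by
    rw [ha21u, two_rpow_add', two_rpow_add', two_rpow_add', two_rpow_add', r5,
      show 2*(R21 - R12 - R132c) = 2*R21 - 2*R12 - 2*R132c by ring,
      two_rpow_sub', two_rpow_sub', ← hA, ← hF, ← hG, ← hE, ← hC]; ring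
  have ea13u : a13u = 32*(C*F*E)*(B/E/G - 1)/(h1^2*P) := by
    rw [ha13u, two_rpow_add', two_rpow_add', two_rpow_add', r5,
      show 2*(R13 - R31 - R132c) = 2*R13 - 2*R31 - 2*R132c by ring,
      two_rpow_sub', two_rpow_sub', ← hC, ← hF, ← hE, ← hB]; ring
  have ea23b : a23b = (2*D - 1)/(2*(h2^2*P)) := by
    rw [ha23b, ea32b]; field_simp
  have ea13b : a13b = 2*D*(2*E - 1)/(2*(h1^2*P)) := by
    rw [ha13b, ea31b]; field_simp
  have ea12b : a12b = 8*(F*E)*(2*A - 1)/(2*(h1^2*P)) := by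
    rw [ha12b, ea21b]; field_simp [show h2 ≠ 0 by rintro rfl; simp at h2n]
  have ea13c : a13c = 4*(D*E)*(2*G - 1)/(2*(h1^2*P)) := by
    rw [ha13c, ea32c]; field_simp
  have eat13c : at13c = 16*(A*F*E)*(2*G - 1)/(2*(h1^2*P)) := by
    rw [hat13c, ea21c]; field_simp [show h2 ≠ 0 by rintro rfl; simp at h2n]
  -- products ≥ 1
  have hDEG : (1:ℝ) ≤ D*E*G := one_le_mul3 (one_le_mul3 hD1 hE1) hG1'
  have hAEFG : (1:ℝ) ≤ A*E*F*G := one_le_mul3 (one_le_mul3 (one_le_mul3 hA1 hE1) hF1) hG1'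
  have hCEF : (1:ℝ) ≤ C*E*F := one_le_mul3 (one_le_mul3 hC1 hE1) hF1
  have hBD : (1:ℝ) ≤ B*D := one_le_mul3 hB1 hD1
  have hABF : (1:ℝ) ≤ A*B*F := one_le_mul3 (one_le_mul3 hA1 hB1) hF1
  -- main case bound
  have hMain : 64*(B*C*F) ≤ (1 + 2*(h1^2*P))*G := by
    rcases hcase with h | h | h
    · have e : 64*(B*C*F) = 64*(A*B*F)*G := by rw [← h]; ring
      rw [e]
      have h64 : 64*(A*B*F) ≤ 1 + 2*(h1^2*P) := by linarith
      exact mul_le_mul_of_nonneg_right h64 hG0.le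
    · have e : 64*(B*C*F) = 64*(B*C*D)*G := by rw [← h]; ring
      rw [e]
      have h64 : 64*(B*C*D) ≤ 1 + 2*(h1^2*P) := by linarith
      exact mul_le_mul_of_nonneg_right h64 hG0.le
    · have e : 64*(B*C*F) = 64*(C*E*F)*G := by rw [← h]; ring
      rw [e]
      have h64 : 64*(C*E*F) ≤ 1 + 2*(h1^2*P) := by linarith
      exact mul_le_mul_of_nonneg_right h64 hG0.le
  -- Goal 1
  have goal1 : a32b + a31b + a32c + a32u ≤ 1 := by
    have S1 : a32b + a31b + a32c + a32u = (16*(E*F) - 8*(D*E*G) - 1)/(2*(h3^2*P)) := by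
      rw [ea32b, ea31b, ea32c, ea32u]
      field_simp
      ring
    rw [S1, div_le_one (by linarith : (0:ℝ) < 2*(h3^2*P))]
    linarith
  -- Goal 2
  have goal2 : a23b + a21b + a21c + a21u ≤ 1 := by
    have S2 : a23b + a21b + a21c + a21u
        = (2*D - 1 - 8*(E*F) + 64*(C*E*F) - 32*(A*E*F*G))/(2*(h2^2*P)) := by
      rw [ea23b, ea21b, ea21c, ea21u]
      field_simp
      ring
    rw [S2, div_le_one (by linarith : (0:ℝ) < 2*(h2^2*P))]
    have h2d : 2*D ≤ 8*(E*F) := twoD_le hDF hE1 hD0 hF0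
    linarith
  -- Goal 3
  have goal3 : a13b + a12b + a13c + at13c + a13u ≤ 1 := by
    have S3 : a13b + a12b + a13c + at13c + a13u
        = ((8*(D*E*G) - 2*D - 8*(E*F) + 32*(A*E*F*G) - 64*(C*E*F))*G + 64*(B*C*F))
          /(2*(h1^2*P)*G) := by
      rw [ea13b, ea12b, ea13c, eat13c, ea13u]
      field_simp
      ring
    rw [S3, div_le_one (by positivity)]
    have := num3bound hD1 hG0 hCEF hDGF hAGC hE0 hF0 hMain hx1
    linarith
  -- Goal 4
  refine ⟨goal1, goal2, goal3, ?_⟩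
  have g1eq : (2:ℝ)^(2*(R13+R23)) = B*D := by
    rw [show 2*(R13+R23) = 2*R13+2*R23 by ring, two_rpow_add', ← hB, ← hD]
  have g2eq : (2:ℝ)^(2*(R32 - R23 + R12)) = F/D*A := by
    rw [show 2*(R32 - R23 + R12) = 2*R32 - 2*R23 + 2*R12 by ring, two_rpow_add',
      two_rpow_sub', ← hF, ← hD, ← hA]
  have g3eq : (2:ℝ)^(2*(R13+R32+R12)) = B*F*A := by
    rw [show 2*(R13+R32+R12) = 2*R13+(2*R32+2*R12) by ring, two_rpow_add', two_rpow_add',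
      ← hB, ← hF, ← hA]; ring
  have g4eq : (2:ℝ)^(2*(R21 - R12 - R132c)) = C/A/G := by
    rw [show 2*(R21 - R12 - R132c) = 2*R21 - 2*R12 - 2*R132c by ring, two_rpow_sub',
      two_rpow_sub', ← hC, ← hA, ← hG]
  rw [g1eq, g2eq, g3eq, g4eq]
  have t1 : (B*D - 1)/(h3^2*P) ≤ 1/16 := by
    rw [div_le_div_iff₀ hx3 (by norm_num : (0:ℝ) < 16)]
    linarith
  have t2 : B*D*(F/D*A - 1)/(h2^2*P) ≤ 1/16 := by
    have e : B*D*(F/D*A - 1)/(h2^2*P) = (A*B*F - B*D)/(h2^2*P) := by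
      field_simp
    rw [e, div_le_div_iff₀ hx2 (by norm_num : (0:ℝ) < 16)]
    linarith
  have t3 : B*F*A*(C/A/G - 1)/(h1^2*P) ≤ 1/32 := by
    have e : B*F*A*(C/A/G - 1)/(h1^2*P) = (B*C*F - A*B*F*G)/(h1^2*P*G) := by
      field_simp
    rw [e, div_le_div_iff₀ (mul_pos hx1 hG0) (by norm_num : (0:ℝ) < 32)]
    have := t3bound hABF hG0 hx1 hMain
    linarith
  linarith [t1, t2, t3]
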